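/- arXiv:1207.3880 — 3 statements merged into one kernel-verified Lean document; each statement's English description precedes it below -/
import Mathlib

section
/- Let M : Fin 2 → Matrix (Fin 3) (Fin 3) ℚ be given by M 0 = (1/3)·![![2,0,0],![0,1,0],![0,0,1]] and M 1 = (1/3)·![![2,0,1],![0,1,0],![0,0,1]]. Then for every e : ℕ and every binary word w : List (Fin 2), applying the matrices M d for the successive digits d of w (in order, leftmost first) to the vector ![(e : ℚ), 1, 1] yields ((1/3 : ℚ)^w.length) • ![((encFrom e w : ℕ) : ℚ), 1, 1], where encFrom e w = w.foldl (fun acc d => 2 * acc + (d : ℕ)) e. Formally: w.foldl (fun v d => (M d).mulVec v) ![(e : ℚ), 1, 1] = ((1/3 : ℚ)^w.length) • ![((encFrom e w : ℕ) : ℚ), 1, 1]. -/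
/-- Value of the binary word `w` in base 2 (most significant digit first),
starting from the value `e`. -/
def encFrom (e : ℕ) (w : List (Fin 2)) : ℕ :=
  w.foldl (fun acc d => 2 * acc + (d : ℕ)) e

/-- The outcome-1 operation elements of the superoperators `ℰ_a` and `ℰ_b`. -/
def M : Fin 2 → Matrix (Fin 3) (Fin 3) ℚ :=
  ![(1/3 : ℚ) • !![2, 0, 0; 0, 1, 0; 0, 0, 1],
    (1/3 : ℚ) • !![2, 0, 1; 0, 1, 0; 0, 0, 1]]

lemma foldl_smul (w : List (Fin 2)) (c : ℚ) (v : Fin 3 → ℚ) :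
    w.foldl (fun v d => (M d).mulVec v) (c • v) =
      c • w.foldl (fun v d => (M d).mulVec v) v := by
  induction w generalizing v with
  | nil => rfl
  | cons d t ih => simp [List.foldl_cons, Matrix.mulVec_smul, ih]

lemma step (d : Fin 2) (e : ℚ) :
    (M d).mulVec ![e, 1, 1] = (1/3 : ℚ) • ![2 * e + (d : ℕ), 1, 1] := by
  fin_cases d <;>
  · funext i
    fin_cases i <;>
      simp [M, Matrix.mulVec, dotProduct, Fin.sum_univ_three] <;> ring

theorem encode_first_amplitude (e : ℕ) (w : List (Fin 2)) :
    w.foldl (fun v d => (M d).mulVec v) ![(e : ℚ), 1, 1] =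
      ((1/3 : ℚ) ^ w.length) • ![((encFrom e w : ℕ) : ℚ), 1, 1] := by
  induction w generalizing e with
  | nil => simp [encFrom]
  | cons d t ih =>
    rw [List.foldl_cons, step, foldl_smul]
    have : ((2 * e + (d : ℕ) : ℕ) : ℚ) = 2 * (e : ℚ) + (d : ℕ) := by push_cast; ring
    rw [← this, ih]
    simp [encFrom, pow_succ, smul_smul, mul_comm, mul_assoc]
end

section
/- Let C = (1/3)·![![1,0,0],![1,0,0],![1,0,0]], H = (1/3)·(1 : Matrix (Fin 3) (Fin 3) ℚ), M 0 = (1/3)·![![2,0,0],![0,1,0],![0,0,1]], M 1 = (1/3)·![![2,0,1],![0,1,0],![0,0,1]], M' 0 = (1/3)·![![1,0,0],![0,2,0],![0,0,1]], M' 1 = (1/3)·![![1,0,0],![0,2,1],![0,0,1]], all 3×3 matrices over ℚ. For all binary words u₁, u₂ : List (Fin 2), the vector obtained from ![(1:ℚ),0,0] by applying C, then M d for the successive digits d of u₁, then H, then M' d for the successive digits d of u₂, equals ((1/3 : ℚ)^(u₁.length + u₂.length + 2)) • ![((enc u₁ : ℕ) : ℚ), ((enc u₂ : ℕ) : ℚ),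 1], where enc w = w.foldl (fun acc d => 2 * acc + (d : ℕ)) 1. -/
/-- The value of the binary string `1w` read in base 2, most significant digit first. -/
def enc (w : List (Fin 2)) : ℕ :=
  w.foldl (fun acc d => 2 * acc + (d : ℕ)) 1

/-- Outcome-1 operation element of the superoperator `ℰ_¢`. -/
def C : Matrix (Fin 3) (Fin 3) ℚ := (1/3 : ℚ) • !![1, 0, 0; 1, 0, 0; 1, 0, 0]

/-- Outcome-1 operation element of the superoperator `ℰ_#`. -/
def H : Matrix (Fin 3) (Fin 3) ℚ := (1/3 : ℚ) • (1 : Matrix (Fin 3) (Fin 3) ℚ)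

/-- Outcome-1 operation elements of the superoperators `ℰ'_a` and `ℰ'_b`. -/
def M' : Fin 2 → Matrix (Fin 3) (Fin 3) ℚ :=
  ![(1/3 : ℚ) • !![1, 0, 0; 0, 2, 0; 0, 0, 1],
    (1/3 : ℚ) • !![1, 0, 0; 0, 2, 1; 0, 0, 1]]

/-- Rational-valued digit accumulation step. -/
def f2 (a : ℚ) (d : Fin 2) : ℚ := 2 * a + (d : ℚ)

lemma Mstep (d : Fin 2) (c x y : ℚ) :
    (M d).mulVec (c • ![x, y, 1]) = ((1/3 : ℚ) * c) • ![f2 x d, y, 1] := by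
  fin_cases d <;>
    · funext i; fin_cases i <;>
        · simp [M, f2, Matrix.mulVec, dotProduct, Fin.sum_univ_three]
          try ring

lemma M'step (d : Fin 2) (c x y : ℚ) :
    (M' d).mulVec (c • ![x, y, 1]) = ((1/3 : ℚ) * c) • ![x, f2 y d, 1] := by
  fin_cases d <;>
    · funext i; fin_cases i <;>
        · simp [M', f2, Matrix.mulVec, dotProduct, Fin.sum_univ_three]
          try ring

lemma Mfold (w : List (Fin 2)) : ∀ (c x y : ℚ),
    w.foldl (fun v d => (M d).mulVec v) (c • ![x, y, 1]) =
      ((1/3 : ℚ) ^ w.length * c) • ![w.foldl f2 x, y, 1] := by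
  induction w with
  | nil => intro c x y; simp
  | cons d w ih =>
      intro c x y
      simp only [List.foldl_cons, Mstep, ih, List.length_cons]
      congr 1
      ring

lemma M'fold (w : List (Fin 2)) : ∀ (c x y : ℚ),
    w.foldl (fun v d => (M' d).mulVec v) (c • ![x, y, 1]) =
      ((1/3 : ℚ) ^ w.length * c) • ![x, w.foldl f2 y, 1] := by
  induction w with
  | nil => intro c x y; simp
  | cons d w ih =>
      intro c x y
      simp only [List.foldl_cons, M'step, ih, List.length_cons]
      congr 1
      ring

lemma foldl_cast (l : List ℕ) : ∀ (n : ℕ),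
    ((l.foldl (fun a d => 2 * a + d) n : ℕ) : ℚ) =
      l.foldl (fun (a : ℚ) (d : ℕ) => 2 * a + (d : ℚ)) (n : ℚ) := by
  induction l with
  | nil => intro n; rfl
  | cons d l ih =>
      intro n
      simp only [List.foldl_cons, ih]
      push_cast
      rfl

lemma enc_cast (w : List (Fin 2)) : ((enc w : ℕ) : ℚ) = w.foldl f2 1 := by
  have h : enc w = (w.map Fin.val).foldl (fun a d => 2 * a + d) 1 := by
    simp [enc, List.map_eq_flatMap]
  rw [h, foldl_cast, List.foldl_map]
  norm_num
  rfl

theorem surviving_branch_state (u₁ u₂ : List (Fin 2)) :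
    u₂.foldl (fun v d => (M' d).mulVec v)
        (H.mulVec (u₁.foldl (fun v d => (M d).mulVec v) (C.mulVec ![(1 : ℚ), 0, 0]))) =
      ((1/3 : ℚ) ^ (u₁.length + u₂.length + 2)) •
        ![((enc u₁ : ℕ) : ℚ), ((enc u₂ : ℕ) : ℚ), 1] := by
  have hC : C.mulVec ![(1 : ℚ), 0, 0] = (1/3 : ℚ) • ![1, 1, 1] := by
    funext i; fin_cases i <;>
      norm_num [C, Matrix.mulVec, dotProduct, Fin.sum_univ_three] <;> rfl
  have hH : ∀ v : Fin 3 → ℚ, H.mulVec v = (1/3 : ℚ) • v := by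
    intro v; simp [H, Matrix.smul_mulVec]
  rw [hC, Mfold, hH, smul_smul, M'fold]
  have h1 : (enc u₁ : ℚ) = u₁.foldl f2 1 := enc_cast u₁
  have h2 : (enc u₂ : ℚ) = u₂.foldl f2 1 := enc_cast u₂
  rw [← h1, ← h2]
  congr 1
  ring
end

section
/- Let enc w = w.foldl (fun acc d => 2 * acc + (d : ℕ)) 1 for w : List (Fin 2). For all binary words u₁, u₂ : List (Fin 2) with u₁ ≠ u₂, set ℓ = u₁.length + u₂.length + 3, a = (1/9 : ℝ)^ℓ and r = 4 * (1/9 : ℝ)^ℓ * ((enc u₁ : ℝ) - (enc u₂ : ℝ))^2. Then 0 < a, 4 * a ≤ r, a + r ≤ 1, and ∑' (n : ℕ), (1 - (a + r))^n * r ≥ 4/5. -/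
lemma enc_append (w : List (Fin 2)) (d : Fin 2) :
    enc (w ++ [d]) = 2 * enc w + (d : ℕ) := by
  simp [enc, List.foldl_append]

lemma one_le_enc (w : List (Fin 2)) : 1 ≤ enc w := by
  induction w using List.reverseRecOn with
  | nil => simp [enc]
  | append_singleton w d ih => rw [enc_append]; omega

lemma enc_lt (w : List (Fin 2)) : enc w < 2 ^ (w.length + 1) := by
  induction w using List.reverseRecOn with
  | nil => simp [enc]
  | append_singleton w d ih =>
      rw [enc_append]
      have hd : (d : ℕ) ≤ 1 := by omega
      simp only [List.length_append, List.length_singleton]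
      have : 2 ^ (w.length + 1 + 1) = 2 * 2 ^ (w.length + 1) := by ring
      omega

lemma enc_inj : ∀ w₁ w₂ : List (Fin 2), enc w₁ = enc w₂ → w₁ = w₂ := by
  intro w₁
  induction w₁ using List.reverseRecOn with
  | nil =>
      intro w₂ h
      induction w₂ using List.reverseRecOn with
      | nil => rfl
      | append_singleton w d ih =>
          rw [enc_append] at h
          have h1 := one_le_enc w
          have hnil : enc [] = 1 := rfl
          rw [hnil] at h
          omega
  | append_singleton w d ih =>
      intro w₂ h
      induction w₂ using List.reverseRecOn with
      | nil =>
          rw [enc_append] at h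
          have h1 := one_le_enc w
          have hnil : enc [] = 1 := rfl
          rw [hnil] at h
          omega
      | append_singleton w' d' ih' =>
          rw [enc_append, enc_append] at h
          have hd : (d : ℕ) ≤ 1 := by omega
          have hd' : (d' : ℕ) ≤ 1 := by omega
          have hdd : (d : ℕ) = (d' : ℕ) := by omega
          have he : enc w = enc w' := by omega
          have := ih w' he
          have : d = d' := Fin.ext hdd
          subst this
          rw [ih w' he]

theorem twin_nonmember_rejected (u₁ u₂ : List (Fin 2)) (hne : u₁ ≠ u₂)
    (ℓ : ℕ) (hℓ : ℓ = u₁.length + u₂.length + 3)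
    (a r : ℝ) (ha : a = (1/9 : ℝ) ^ ℓ)
    (hr : r = 4 * (1/9 : ℝ) ^ ℓ * ((enc u₁ : ℝ) - (enc u₂ : ℝ)) ^ 2) :
    0 < a ∧ 4 * a ≤ r ∧ a + r ≤ 1 ∧ ∑' (n : ℕ), (1 - (a + r)) ^ n * r ≥ 4 / 5 := by
  set n := u₁.length + u₂.length with hn
  have ha0 : 0 < a := by rw [ha]; positivity
  -- the difference of encodings is a nonzero integer
  have hne' : enc u₁ ≠ enc u₂ := fun h => hne (enc_inj _ _ h)
  have hdz : ((enc u₁ : ℤ) - (enc u₂ : ℤ)) ≠ 0 := by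
    intro h; apply hne'; omega
  have habs : 1 ≤ |(enc u₁ : ℤ) - (enc u₂ : ℤ)| := Int.one_le_abs hdz
  have hsq1 : (1 : ℝ) ≤ ((enc u₁ : ℝ) - (enc u₂ : ℝ)) ^ 2 := by
    have h1 : (1 : ℤ) ≤ ((enc u₁ : ℤ) - (enc u₂ : ℤ)) ^ 2 := by
      nlinarith [sq_abs ((enc u₁ : ℤ) - (enc u₂ : ℤ))]
    exact_mod_cast h1
  have h4ar : 4 * a ≤ r := by
    rw [ha, hr]
    nlinarith [pow_pos (by norm_num : (0:ℝ) < 1/9) ℓ]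
  -- upper bound on the square
  have hb1 : (enc u₁ : ℝ) ≤ 2 ^ (n + 1) := by
    have := enc_lt u₁
    have h2 : enc u₁ ≤ 2 ^ (n + 1) := by
      calc enc u₁ ≤ 2 ^ (u₁.length + 1) := this.le
        _ ≤ 2 ^ (n + 1) := Nat.pow_le_pow_right (by norm_num) (by omega)
    exact_mod_cast Nat.cast_le.mpr h2 |>.trans_eq (by push_cast; ring)
  have hb2 : (enc u₂ : ℝ) ≤ 2 ^ (n + 1) := by
    have := enc_lt u₂
    have h2 : enc u₂ ≤ 2 ^ (n + 1) := by
      calc enc u₂ ≤ 2 ^ (u₂.length + 1) := this.le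
        _ ≤ 2 ^ (n + 1) := Nat.pow_le_pow_right (by norm_num) (by omega)
    exact_mod_cast Nat.cast_le.mpr h2 |>.trans_eq (by push_cast; ring)
  have hpos1 : (0 : ℝ) ≤ (enc u₁ : ℝ) := Nat.cast_nonneg _
  have hpos2 : (0 : ℝ) ≤ (enc u₂ : ℝ) := Nat.cast_nonneg _
  have hsqub : ((enc u₁ : ℝ) - (enc u₂ : ℝ)) ^ 2 ≤ (2 ^ (n + 1)) ^ 2 := by
    apply sq_le_sq'
    · linarith
    · linarith
  have har1 : a + r ≤ 1 := by
    have hkeyN : 1 + 4 * (2 ^ (n + 1)) ^ 2 ≤ 9 ^ (n + 3) := by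
      have e1 : (2 ^ (n + 1)) ^ 2 = 4 ^ (n + 1) := by
        rw [← pow_mul, mul_comm, pow_mul]; norm_num
      have e2 : 4 * 4 ^ (n + 1) = 4 ^ (n + 2) := by rw [pow_succ]; ring
      have h4 : 4 ^ (n + 2) ≤ 9 ^ (n + 2) := Nat.pow_le_pow_left (by norm_num) _
      have h9 : 9 ^ (n + 3) = 9 * 9 ^ (n + 2) := by rw [pow_succ]; ring
      have hp : 1 ≤ 9 ^ (n + 2) := Nat.one_le_pow _ _ (by norm_num)
      omega
    have hkey : (1 : ℝ) + 4 * (2 ^ (n + 1)) ^ 2 ≤ 9 ^ (n + 3) := by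
      exact_mod_cast hkeyN
    have h9pos : (0 : ℝ) < 9 ^ (n + 3) := by positivity
    have hi : (0 : ℝ) ≤ ((9 : ℝ) ^ (n + 3))⁻¹ := by positivity
    have haeq : a = ((9 : ℝ) ^ (n + 3))⁻¹ := by
      rw [ha, hℓ, one_div, inv_pow]
    have hrle : r ≤ 4 * (2 ^ (n + 1)) ^ 2 * ((9 : ℝ) ^ (n + 3))⁻¹ := by
      rw [hr, hℓ, one_div, inv_pow]
      nlinarith [mul_le_mul_of_nonneg_right hsqub hi]
    have hmul : (1 + 4 * (2 ^ (n + 1)) ^ 2) * ((9 : ℝ) ^ (n + 3))⁻¹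
        ≤ 9 ^ (n + 3) * ((9 : ℝ) ^ (n + 3))⁻¹ :=
      mul_le_mul_of_nonneg_right hkey hi
    have hone : (9 : ℝ) ^ (n + 3) * ((9 : ℝ) ^ (n + 3))⁻¹ = 1 :=
      mul_inv_cancel₀ (ne_of_gt h9pos)
    nlinarith
  refine ⟨ha0, h4ar, har1, ?_⟩
  have hr0 : 0 < r := by nlinarith
  have hx0 : 0 ≤ 1 - (a + r) := by linarith
  have hx1 : 1 - (a + r) < 1 := by linarith
  rw [tsum_mul_right, tsum_geometric_of_lt_one hx0 hx1, sub_sub_cancel]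
  have hsum : 0 < a + r := by linarith
  rw [ge_iff_le, inv_mul_eq_div, le_div_iff₀ hsum]
  nlinarith
end
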